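/- arXiv:1311.0198 — 2 statements merged into one kernel-verified Lean document; each statement's English description precedes it below -/
import Mathlib

section
/- Post-processing a one-sided winner selection never loses welfare: let k be the number of asks and let Sel be any set of at most k elements of the combined collection of asks and bids (the winners selected by a one-sided auction). Process the selected bids one at a time in a fixed order, matching each selected bid b to the lowest-value currently unmatched ask a if a ≤ b and leaving b unmatched otherwise. Then the resulting social welfare (the sum of the values of the matched bids plus the sum of the values of the asks that remain unmatched) is at least the total value of all elements of Sel. -/
/-- Extract the minimum-value unmatched ask from a list, with a fixed
tie-breaking rule (earlier list positions are preferred). Returns the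
minimum together with the remaining list. -/
noncomputable def extractMin : List ℝ → Option (ℝ × List ℝ)
  | [] => none
  | a :: as =>
    match extractMin as with
    | none => some (a, [])
    | some (m, rest) => if a ≤ m then some (a, as) else some (m, a :: rest)

/-- State of the Best-first (greedy) allocation: the currently unmatched asks,
the matched (ask, bid) pairs in match order, and the unmatched bids. -/
structure BfState where
  unmatchedAsks : List ℝ
  matched : List (ℝ × ℝ)
  unmatchedBids : List ℝ

/-- One step of the Best-first allocation: when bid `b` arrives, match it to the
minimum unmatched ask `a` if `a ≤ b`; otherwise leave `b` unmatched. -/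
noncomputable def bfStep (s : BfState) (b : ℝ) : BfState :=
  match extractMin s.unmatchedAsks with
  | some (a, rest) =>
      if a ≤ b then ⟨rest, s.matched ++ [(a, b)], s.unmatchedBids⟩
      else ⟨s.unmatchedAsks, s.matched, s.unmatchedBids ++ [b]⟩
  | none => ⟨s.unmatchedAsks, s.matched, s.unmatchedBids ++ [b]⟩

/-- Run the Best-first allocation on the bids in arrival order. -/
noncomputable def bfRun (asks bids : List ℝ) : BfState :=
  bids.foldl bfStep ⟨asks, [], []⟩

/-- Insertion into an ascending-sorted list. -/
noncomputable def insertAsc (x : ℝ) : List ℝ → List ℝ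
  | [] => [x]
  | y :: ys => if x ≤ y then x :: y :: ys else y :: insertAsc x ys

/-- Sort a list of reals in ascending order. -/
noncomputable def sortAsc (l : List ℝ) : List ℝ := l.foldr insertAsc []

/-- Sort a list of reals in descending order. -/
noncomputable def sortDesc (l : List ℝ) : List ℝ := (sortAsc l).reverse

/-- Match the i-th element of the first list with the i-th element of the
second, stopping as soon as a pair is not matchable (`a ≤ b` fails). -/
noncomputable def matchPrefix : List ℝ → List ℝ → List (ℝ × ℝ)
  | a :: as, b :: bs => if a ≤ b then (a, b) :: matchPrefix as bs else []
  | _, _ => []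

/-- The optimal allocation: match the highest bid with the lowest ask, the
second highest bid with the second lowest ask, and so on, stopping as soon as
a pair is not matchable. -/
noncomputable def optPairs (asks bids : List ℝ) : List (ℝ × ℝ) :=
  matchPrefix (sortAsc asks) (sortDesc bids)

/-- A feasible allocation: a partial matching (multiset of (ask, bid) pairs)
using each ask and each bid at most once, with `a ≤ b` for every matched pair. -/
def IsFeasible (asks bids : List ℝ) (M : Multiset (ℝ × ℝ)) : Prop :=
  M.map Prod.fst ≤ (asks : Multiset ℝ) ∧
  M.map Prod.snd ≤ (bids : Multiset ℝ) ∧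
  ∀ p ∈ M, p.1 ≤ p.2

/-- Social welfare of an allocation: sum of matched bid values plus the sum of
the values of the unmatched asks. -/
noncomputable def welfare (asks : List ℝ) (M : Multiset (ℝ × ℝ)) : ℝ :=
  (M.map Prod.snd).sum + ((asks : Multiset ℝ) - M.map Prod.fst).sum

/-- Social welfare of the Best-first allocation. -/
noncomputable def bfWelfare (asks bids : List ℝ) : ℝ :=
  ((bfRun asks bids).matched.map Prod.snd).sum + (bfRun asks bids).unmatchedAsks.sum

/-- Maximum social welfare over all feasible allocations. -/
noncomputable def OptW (asks bids : List ℝ) : ℝ :=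
  sSup {w : ℝ | ∃ M : Multiset (ℝ × ℝ), IsFeasible asks bids M ∧ w = welfare asks M}

lemma extractMin_eq_none {l : List ℝ} (h : extractMin l = none) : l = [] := by
  cases l with
  | nil => rfl
  | cons a as =>
    exfalso
    cases h' : extractMin as with
    | none => simp [extractMin, h'] at h
    | some p =>
      obtain ⟨m, rest⟩ := p
      by_cases hm : a ≤ m <;> simp [extractMin, h', hm] at h

lemma extractMin_perm : ∀ {l : List ℝ} {m : ℝ} {rest : List ℝ},
    extractMin l = some (m, rest) → (l : Multiset ℝ) = m ::ₘ (rest : Multiset ℝ) := by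
  intro l
  induction l with
  | nil => intro m rest h; simp [extractMin] at h
  | cons a as ih =>
    intro m rest h
    cases h' : extractMin as with
    | none =>
      have has : as = [] := extractMin_eq_none h'
      simp [extractMin, h'] at h
      obtain ⟨hm, hr⟩ := h
      subst hm; subst hr; subst has
      rfl
    | some p =>
      obtain ⟨m', rest'⟩ := p
      by_cases hm : a ≤ m'
      · simp [extractMin, h', hm] at h
        obtain ⟨h1, h2⟩ := h
        subst h1; subst h2; rfl
      · simp [extractMin, h', hm] at h
        obtain ⟨h1, h2⟩ := h
        subst h1; subst h2
        have hcoe := ih h'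
        rw [show ((a :: as : List ℝ) : Multiset ℝ) = a ::ₘ (as : Multiset ℝ) from rfl, hcoe]
        exact Multiset.cons_swap _ _ _

lemma extractMin_min : ∀ {l : List ℝ} {m : ℝ} {rest : List ℝ},
    extractMin l = some (m, rest) → ∀ x ∈ l, m ≤ x := by
  intro l
  induction l with
  | nil => intro m rest h; simp [extractMin] at h
  | cons a as ih =>
    intro m rest h x hx
    cases h' : extractMin as with
    | none =>
      have has : as = [] := extractMin_eq_none h'
      simp [extractMin, h'] at h
      obtain ⟨h1, h2⟩ := h
      subst h1; subst has
      simp at hx; subst hx; rfl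
    | some p =>
      obtain ⟨m', rest'⟩ := p
      by_cases hm : a ≤ m'
      · simp [extractMin, h', hm] at h
        obtain ⟨h1, h2⟩ := h
        subst h1
        rcases List.mem_cons.mp hx with hx | hx
        · exact le_of_eq hx.symm
        · exact le_trans hm (ih h' x hx)
      · simp [extractMin, h', hm] at h
        obtain ⟨h1, h2⟩ := h
        subst h1
        rcases List.mem_cons.mp hx with hx | hx
        · subst hx; exact le_of_lt (lt_of_not_ge hm)
        · exact ih h' x hx

/-- The invariant maintained by the Best-first allocation. -/
def BfInv (A B : Multiset ℝ) (s : BfState) : Prop :=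
  ((s.matched.map Prod.fst : List ℝ) : Multiset ℝ) + (s.unmatchedAsks : Multiset ℝ) = A ∧
  ((s.matched.map Prod.snd : List ℝ) : Multiset ℝ) + (s.unmatchedBids : Multiset ℝ) = B ∧
  (∀ p ∈ s.matched, ∀ r ∈ s.unmatchedAsks, p.1 ≤ r) ∧
  (∀ b ∈ s.unmatchedBids, ∀ r ∈ s.unmatchedAsks, b ≤ r)

lemma bfStep_inv {A B : Multiset ℝ} {s : BfState} (h : BfInv A B s) (b : ℝ) :
    BfInv A (b ::ₘ B) (bfStep s b) := by
  obtain ⟨h1, h2, h3, h4⟩ := h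
  cases hext : extractMin s.unmatchedAsks with
  | none =>
    have hempty : s.unmatchedAsks = [] := extractMin_eq_none hext
    refine ⟨?_, ?_, ?_, ?_⟩ <;> simp only [bfStep, hext]
    · exact h1
    · rw [← h2, show ((s.unmatchedBids ++ [b] : List ℝ) : Multiset ℝ)
        = ↑s.unmatchedBids + {b} from rfl]
      simp only [← Multiset.singleton_add]
      abel
    · exact h3
    · intro b' _ r hr
      rw [hempty] at hr
      simp at hr
  | some p =>
    obtain ⟨a, rest⟩ := p
    have hperm := extractMin_perm hext
    have hmin := extractMin_min hext
    have hrest_mem : ∀ r ∈ rest, r ∈ s.unmatchedAsks := by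
      intro r hr
      have : r ∈ (s.unmatchedAsks : Multiset ℝ) := by
        rw [hperm]; exact Multiset.mem_cons_of_mem (by exact_mod_cast hr)
      exact_mod_cast this
    by_cases hab : a ≤ b
    · refine ⟨?_, ?_, ?_, ?_⟩ <;> simp only [bfStep, hext, if_pos hab]
      · rw [← h1, hperm, List.map_append,
          show ((List.map Prod.fst s.matched ++ List.map Prod.fst [(a, b)] : List ℝ) : Multiset ℝ)
            = ↑(List.map Prod.fst s.matched) + ↑(List.map Prod.fst [(a, b)]) from rfl]
        simp only [List.map, Multiset.coe_singleton, ← Multiset.singleton_add]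
        abel
      · rw [← h2, List.map_append,
          show ((List.map Prod.snd s.matched ++ List.map Prod.snd [(a, b)] : List ℝ) : Multiset ℝ)
            = ↑(List.map Prod.snd s.matched) + ↑(List.map Prod.snd [(a, b)]) from rfl]
        simp only [List.map, Multiset.coe_singleton, ← Multiset.singleton_add]
        abel
      · intro p hp r hr
        simp only [List.mem_append, List.mem_singleton] at hp
        rcases hp with hp | hp
        · exact h3 p hp r (hrest_mem r hr)
        · subst hp; exact hmin r (hrest_mem r hr)
      · intro b' hb' r hr
        exact h4 b' hb' r (hrest_mem r hr)
    · refine ⟨?_, ?_, ?_, ?_⟩ <;> simp only [bfStep, hext, if_neg hab]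
      · exact h1
      · rw [← h2, show ((s.unmatchedBids ++ [b] : List ℝ) : Multiset ℝ)
          = ↑s.unmatchedBids + {b} from rfl]
        simp only [← Multiset.singleton_add]
        abel
      · exact h3
      · intro b' hb' r hr
        simp only [List.mem_append, List.mem_singleton] at hb'
        rcases hb' with hb' | hb'
        · exact h4 b' hb' r hr
        · have h5 : a ≤ r := hmin r hr
          have h6 : b < a := lt_of_not_ge hab
          rw [hb']
          linarith

lemma bfFoldl_inv : ∀ (bids : List ℝ) {A B : Multiset ℝ} {s : BfState},
    BfInv A B s → BfInv A (B + (bids : Multiset ℝ)) (bids.foldl bfStep s) := by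
  intro bids
  induction bids with
  | nil => intro A B s h; simpa using h
  | cons b bs ih =>
    intro A B s h
    have heq : B + ((b :: bs : List ℝ) : Multiset ℝ) = (b ::ₘ B) + (bs : Multiset ℝ) := by
      rw [show ((b :: bs : List ℝ) : Multiset ℝ) = b ::ₘ (bs : Multiset ℝ) from rfl,
        Multiset.add_cons, Multiset.cons_add]
    rw [List.foldl_cons, heq]
    exact ih (bfStep_inv h b)

lemma bfRun_inv (asks bids : List ℝ) :
    BfInv (asks : Multiset ℝ) (bids : Multiset ℝ) (bfRun asks bids) := by
  have h0 : BfInv (asks : Multiset ℝ) (0 : Multiset ℝ) ⟨asks, [], []⟩ := by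
    refine ⟨by simp, by simp, by simp, by simp⟩
  have := bfFoldl_inv bids h0
  simpa [bfRun] using this

lemma sum_le_sum_of_card_le (X Y : Multiset ℝ) (hc : Multiset.card X ≤ Multiset.card Y)
    (hxy : ∀ x ∈ X, ∀ y ∈ Y, x ≤ y) (hy : ∀ y ∈ Y, 0 ≤ y) : X.sum ≤ Y.sum := by
  induction X using Multiset.induction generalizing Y with
  | empty => simpa using Multiset.sum_nonneg hy
  | cons x X ih =>
    have hY0 : Y ≠ 0 := by
      intro h; subst h; simp at hc
    obtain ⟨y, hyY⟩ := Multiset.exists_mem_of_ne_zero hY0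
    have hYer : y ::ₘ Y.erase y = Y := Multiset.cons_erase hyY
    have hsum : X.sum ≤ (Y.erase y).sum := by
      apply ih
      · have : Multiset.card Y = Multiset.card (Y.erase y) + 1 := by
          rw [← hYer]; simp
        simp only [Multiset.card_cons] at hc
        omega
      · intro x' hx' y' hy'
        exact hxy x' (Multiset.mem_cons_of_mem hx') y' (Multiset.mem_of_mem_erase hy')
      · intro y' hy'
        exact hy y' (Multiset.mem_of_mem_erase hy')
    calc (x ::ₘ X).sum = x + X.sum := by simp
    _ ≤ y + (Y.erase y).sum := add_le_add (hxy x (Multiset.mem_cons_self x X) y hyY) hsum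
    _ = (y ::ₘ Y.erase y).sum := by simp
    _ = Y.sum := by rw [hYer]

/-- Post-processing a one-sided winner selection never loses
welfare: let `k` be the number of asks and let the selection consist of asks
`selAsks` and bids `selBids` (at most `k` elements in total, drawn from the
combined collection). Processing the selected bids in order, matching each to
the lowest-value currently unmatched ask `a` whenever `a ≤ b`, yields social
welfare at least the total value of the selection. -/
theorem postprocessing_welfare_ge_selection (asks bids selBids : List ℝ)
    (selAsks : Multiset ℝ)
    (ha : ∀ a ∈ asks, 0 ≤ a) (hb : ∀ b ∈ bids, 0 ≤ b)
    (hselA : selAsks ≤ (asks : Multiset ℝ))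
    (hselB : (selBids : Multiset ℝ) ≤ (bids : Multiset ℝ))
    (hcard : Multiset.card selAsks + selBids.length ≤ asks.length) :
    selAsks.sum + selBids.sum ≤ bfWelfare asks selBids := by
  classical
  obtain ⟨h1, h2, h3, h4⟩ := bfRun_inv asks selBids
  set s := bfRun asks selBids with hs
  set M : Multiset ℝ := ((s.matched.map Prod.fst : List ℝ) : Multiset ℝ) with hM
  set R : Multiset ℝ := (s.unmatchedAsks : Multiset ℝ) with hR
  set U : Multiset ℝ := (s.unmatchedBids : Multiset ℝ) with hU
  -- welfare decomposition
  have hW : bfWelfare asks selBids =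
      ((s.matched.map Prod.snd : List ℝ) : Multiset ℝ).sum + R.sum := by
    simp [bfWelfare, ← hs, hR, Multiset.sum_coe]
  have hBsum : (selBids : Multiset ℝ).sum =
      ((s.matched.map Prod.snd : List ℝ) : Multiset ℝ).sum + U.sum := by
    rw [← h2]; simp
  have hselBsum : selBids.sum = (selBids : Multiset ℝ).sum := (Multiset.sum_coe _).symm
  -- split selAsks along asks = M + R
  set ST : Multiset ℝ := selAsks - R with hST
  set SR : Multiset ℝ := selAsks ∩ R with hSR
  have hsplit : ST + SR = selAsks := Multiset.sub_add_inter selAsks R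
  have hSTM : ST ≤ M := by
    rw [hST, Multiset.sub_le_iff_le_add]
    calc selAsks ≤ (asks : Multiset ℝ) := hselA
    _ = M + R := h1.symm
  have hSRR : SR ≤ R := Multiset.inter_le_right
  -- membership facts
  have hRmem : ∀ r ∈ R, r ∈ (asks : Multiset ℝ) := by
    intro r hr
    rw [← h1]
    exact Multiset.mem_of_le (Multiset.le_add_left _ _) hr
  -- cardinalities
  have hc1 : Multiset.card M + Multiset.card R = asks.length := by
    have := congrArg Multiset.card h1
    simpa using this
  have hc2 : Multiset.card M + Multiset.card U = selBids.length := by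
    have := congrArg Multiset.card h2
    simpa [hM, hU] using this
  have hc3 : Multiset.card ST + Multiset.card SR = Multiset.card selAsks := by
    have := congrArg Multiset.card hsplit
    simpa using this
  have hcSR : Multiset.card SR ≤ Multiset.card R := Multiset.card_le_card hSRR
  -- key inequality: ST.sum + U.sum ≤ (R - SR).sum
  have hkey : (ST + U).sum ≤ (R - SR).sum := by
    apply sum_le_sum_of_card_le
    · rw [Multiset.card_add, Multiset.card_sub hSRR]
      omega
    · intro x hx y hy
      have hyR : y ∈ R := Multiset.mem_of_le (Multiset.sub_le_self _ _) hy
      have hyL : y ∈ s.unmatchedAsks := by exact_mod_cast hyR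
      rcases Multiset.mem_add.mp hx with hx | hx
      · have hxM : x ∈ M := Multiset.mem_of_le hSTM hx
        have : x ∈ s.matched.map Prod.fst := by exact_mod_cast hxM
        obtain ⟨p, hp, hpx⟩ := List.mem_map.mp this
        rw [← hpx]
        exact h3 p hp y hyL
      · have : x ∈ s.unmatchedBids := by exact_mod_cast hx
        exact h4 x this y hyL
    · intro y hy
      exact ha y (by exact_mod_cast hRmem y (Multiset.mem_of_le (Multiset.sub_le_self _ _) hy))
  have hRsum : R.sum = (R - SR).sum + SR.sum := by
    have h' := congrArg Multiset.sum (tsub_add_cancel_of_le hSRR)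
    rw [Multiset.sum_add] at h'
    exact h'.symm
  have hselAsum : selAsks.sum = ST.sum + SR.sum := by
    rw [← hsplit, Multiset.sum_add]
  rw [Multiset.sum_add] at hkey
  rw [hW, hselBsum, hBsum, hselAsum, hRsum]
  linarith
end

section
/- The Best-first allocation makes at least as many trades as the optimal allocation: the number of ask-bid pairs matched by the Best-first allocation is at least the number of ask-bid pairs matched by the optimal allocation (which matches the i-th highest bid to the i-th lowest ask until a pair is not matchable). -/
section Aux

lemma extractMin_none : ∀ {l : List ℝ}, extractMin l = none → l = [] := by
  intro l h
  cases l with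
  | nil => rfl
  | cons a as =>
    rw [extractMin] at h
    cases h' : extractMin as with
    | none => rw [h'] at h; simp at h
    | some pr =>
      obtain ⟨m, rest⟩ := pr
      rw [h'] at h
      by_cases hc : a ≤ m <;> simp [hc] at h

lemma extractMin_spec : ∀ (l : List ℝ) (m : ℝ) (rest : List ℝ),
    extractMin l = some (m, rest) → l.Perm (m :: rest) ∧ ∀ x ∈ l, m ≤ x := by
  intro l
  induction l with
  | nil => intro m rest h; rw [extractMin] at h; simp at h
  | cons a as ih =>
    intro m rest h
    rw [extractMin] at h
    cases h' : extractMin as with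
    | none =>
      have has : as = [] := extractMin_none h'
      rw [h'] at h
      simp only [Option.some.injEq, Prod.mk.injEq] at h
      obtain ⟨rfl, rfl⟩ := h
      subst has
      exact ⟨List.Perm.refl _, by simp⟩
    | some pr =>
      obtain ⟨m', rest'⟩ := pr
      have ⟨hperm, hmin⟩ := ih m' rest' h'
      rw [h'] at h
      by_cases hc : a ≤ m'
      · simp only [hc, if_true, Option.some.injEq, Prod.mk.injEq] at h
        obtain ⟨rfl, rfl⟩ := h
        refine ⟨List.Perm.refl _, ?_⟩
        intro x hx
        rcases List.mem_cons.mp hx with rfl | hx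
        · exact le_refl _
        · exact le_trans hc (hmin x hx)
      · simp only [hc, if_false, Option.some.injEq, Prod.mk.injEq] at h
        obtain ⟨rfl, rfl⟩ := h
        constructor
        · exact (hperm.cons a).trans (List.Perm.swap _ _ _)
        · intro x hx
          rcases List.mem_cons.mp hx with rfl | hx
          · exact le_of_lt (lt_of_not_ge hc)
          · exact hmin x hx

/-- Key invariant for the greedy run. -/
lemma bf_key (t : ℝ) : ∀ (bids : List ℝ) (s : BfState) (k : ℕ),
    k ≤ s.matched.length +
      min (s.unmatchedAsks.countP (fun x => decide (x ≤ t)))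
          (bids.countP (fun x => decide (t ≤ x))) →
    k ≤ (bids.foldl bfStep s).matched.length := by
  intro bids
  induction bids with
  | nil =>
    intro s k h
    simpa using h
  | cons b bs ih =>
    intro s k h
    rw [List.foldl_cons]
    apply ih
    rw [List.countP_cons] at h
    unfold bfStep
    cases h' : extractMin s.unmatchedAsks with
    | none =>
      have hnil : s.unmatchedAsks = [] := extractMin_none h'
      simp only [hnil, List.countP_nil] at h ⊢
      omega
    | some pr =>
      obtain ⟨a, rest⟩ := pr
      have ⟨hperm, hmin⟩ := extractMin_spec _ _ _ h'
      have hcount : s.unmatchedAsks.countP (fun x => decide (x ≤ t))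
          = rest.countP (fun x => decide (x ≤ t)) + (if a ≤ t then 1 else 0) := by
        rw [hperm.countP_eq, List.countP_cons]
        by_cases hat : a ≤ t <;> simp [hat]
      by_cases hab : a ≤ b
      · simp only [hab, if_true]
        simp only [List.length_append, List.length_cons, List.length_nil]
        rw [hcount] at h
        by_cases hat : a ≤ t <;> by_cases htb : t ≤ b <;>
          simp [hat, htb] at h ⊢ <;> omega
      · simp only [hab, if_false]
        by_cases htb : t ≤ b
        · -- a > b ≥ t so no element of the pool is ≤ t
          have h0 : s.unmatchedAsks.countP (fun x => decide (x ≤ t)) = 0 := by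
            rw [List.countP_eq_zero]
            intro x hx
            simp only [decide_eq_true_eq]
            intro hxt
            exact hab (le_trans (hmin x hx) (le_trans hxt htb))
          rw [h0] at h ⊢
          simpa using h
        · simp [htb] at h
          omega

lemma matchPrefix_mem : ∀ (as bs : List ℝ) (p : ℝ × ℝ), p ∈ matchPrefix as bs →
    p.1 ≤ p.2 ∧ p.1 ∈ as ∧ p.2 ∈ bs := by
  intro as
  induction as with
  | nil => intro bs p hp; cases bs <;> simp [matchPrefix] at hp
  | cons a as ih =>
    intro bs p hp
    cases bs with
    | nil => simp [matchPrefix] at hp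
    | cons b bs =>
      rw [matchPrefix] at hp
      by_cases hab : a ≤ b
      · simp only [hab, if_true, List.mem_cons] at hp
        rcases hp with rfl | hp
        · exact ⟨hab, by simp, by simp⟩
        · obtain ⟨h1, h2, h3⟩ := ih bs p hp
          exact ⟨h1, List.mem_cons_of_mem _ h2, List.mem_cons_of_mem _ h3⟩
      · simp [hab] at hp

lemma matchPrefix_count : ∀ (as bs : List ℝ), as.Pairwise (· ≤ ·) →
    bs.Pairwise (fun x y => y ≤ x) →
    matchPrefix as bs = [] ∨ ∃ t,
      ((matchPrefix as bs).length ≤ as.countP (fun x => decide (x ≤ t)) ∧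
       (matchPrefix as bs).length ≤ bs.countP (fun x => decide (t ≤ x)) ∧
       ∃ p ∈ matchPrefix as bs, t = p.1) := by
  intro as
  induction as with
  | nil => intro bs _ _; left; cases bs <;> rfl
  | cons a as ih =>
    intro bs has hbs
    cases bs with
    | nil => left; rfl
    | cons b bs =>
      rw [List.pairwise_cons] at has hbs
      by_cases hab : a ≤ b
      · right
        have hmp : matchPrefix (a :: as) (b :: bs) = (a, b) :: matchPrefix as bs := by
          rw [matchPrefix, if_pos hab]
        rcases ih bs has.2 hbs.2 with hnil | ⟨t, h1, h2, p, hp, rfl⟩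
        · refine ⟨a, ?_⟩
          rw [hmp, hnil]
          refine ⟨?_, ?_, ⟨(a, b), by simp⟩⟩
          · simp [List.countP_cons]
          · simp [List.countP_cons, hab]
        · obtain ⟨hple, hpas, hpbs⟩ := matchPrefix_mem as bs p hp
          refine ⟨p.1, ?_⟩
          rw [hmp]
          refine ⟨?_, ?_, ⟨p, List.mem_cons_of_mem _ hp, rfl⟩⟩
          · rw [List.countP_cons]
            have : a ≤ p.1 := has.1 _ hpas
            simp only [this, decide_true, if_true, List.length_cons]
            omega
          · rw [List.countP_cons]
            have : p.1 ≤ b := le_trans hple (hbs.1 _ hpbs)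
            simp only [this, decide_true, if_true, List.length_cons]
            omega
      · left
        rw [matchPrefix, if_neg hab]

lemma insertAsc_eq (x : ℝ) : ∀ (l : List ℝ), insertAsc x l = l.orderedInsert (· ≤ ·) x := by
  intro l
  induction l with
  | nil => rfl
  | cons y ys ih => rw [insertAsc, List.orderedInsert, ih]

lemma sortAsc_eq (l : List ℝ) : sortAsc l = l.insertionSort (· ≤ ·) := by
  induction l with
  | nil => rfl
  | cons x xs ih =>
    rw [sortAsc, List.foldr_cons, List.insertionSort, insertAsc_eq]
    congr 1

lemma sortAsc_perm (l : List ℝ) : (sortAsc l).Perm l := by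
  rw [sortAsc_eq]; exact List.perm_insertionSort _ l

lemma sortAsc_sorted (l : List ℝ) : (sortAsc l).Pairwise (· ≤ ·) := by
  rw [sortAsc_eq]; exact List.pairwise_insertionSort _ l

lemma sortDesc_perm (l : List ℝ) : (sortDesc l).Perm l := by
  rw [sortDesc]
  exact (List.reverse_perm _).trans (sortAsc_perm l)

lemma sortDesc_sorted (l : List ℝ) : (sortDesc l).Pairwise (fun x y => y ≤ x) := by
  rw [sortDesc, List.pairwise_reverse]
  exact sortAsc_sorted l

end Aux

/-- The Best-first allocation makes at least as many trades
as the optimal allocation (which matches the i-th highest bid to the i-th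
lowest ask until a pair is not matchable). -/
theorem bf_trades_at_least_opt (asks bids : List ℝ)
    (ha : ∀ a ∈ asks, 0 ≤ a) (hb : ∀ b ∈ bids, 0 ≤ b) :
    (optPairs asks bids).length ≤ (bfRun asks bids).matched.length := by
  rw [optPairs]
  rcases matchPrefix_count (sortAsc asks) (sortDesc bids) (sortAsc_sorted asks)
      (sortDesc_sorted bids) with hnil | ⟨t, h1, h2, -⟩
  · rw [hnil]; simp
  · rw [bfRun]
    apply bf_key t
    rw [(sortAsc_perm asks).countP_eq] at h1
    rw [(sortDesc_perm bids).countP_eq] at h2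
    simp only [List.length_nil, Nat.zero_add]
    exact le_min h1 h2
end
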